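/- Let [λ(j)] be an r-multipartition of n and μ a partition of n, and let λ̃ be the partition with parts λ̃_i = Σ_{j=1}^r λ(j)_i. Then K_{[λ(j)]μ} ≥ K_{λ̃ μ}. In particular, K_{[λ(j)]μ} = 1 implies K_{λ̃ μ} = 1. -/

import Mathlib

/-- A partition encoded as a weakly decreasing, finitely supported function `ℕ → ℕ`
(0-indexed: `l 0` is the first part). -/
def IsPartition (l : ℕ → ℕ) : Prop :=
  Antitone l ∧ ∃ N, ∀ i, N ≤ i → l i = 0

/-- The size (sum of the parts). -/
noncomputable def psize (l : ℕ → ℕ) : ℕ := ∑ᶠ i, l i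

/-- Dominance order: every partial sum of `l` is at least that of `m`. -/
def Dominates (l m : ℕ → ℕ) : Prop :=
  ∀ k, ∑ i ∈ Finset.range k, m i ≤ ∑ i ∈ Finset.range k, l i

/-- `l` has exactly `h` (nonzero) parts. -/
def PartLength (l : ℕ → ℕ) (h : ℕ) : Prop :=
  (∀ i, i < h → 0 < l i) ∧ ∀ i, h ≤ i → l i = 0

/-- A semistandard Young tableau of shape `l`: positive entries in the cells
`(i, j)` with `j < l i`, zero outside, rows weakly increasing, columns strictly
increasing. -/
def IsSSYT (l : ℕ → ℕ) (T : ℕ → ℕ → ℕ) : Prop :=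
  (∀ i j, j < l i → 1 ≤ T i j) ∧
  (∀ i j, l i ≤ j → T i j = 0) ∧
  (∀ i j k, j ≤ k → k < l i → T i j ≤ T i k) ∧
  (∀ i i' j, i < i' → j < l i' → T i j < T i' j)

/-- The number of cells of `T` (inside shape `l`) with entry `m + 1`. -/
noncomputable def entryCount (l : ℕ → ℕ) (T : ℕ → ℕ → ℕ) (m : ℕ) : ℕ :=
  Set.ncard {p : ℕ × ℕ | p.2 < l p.1 ∧ T p.1 p.2 = m + 1}

/-- `T` has weight `w`: the entry `m + 1` occurs `w m` times. -/
def HasWeight (l : ℕ → ℕ) (T : ℕ → ℕ → ℕ) (w : ℕ → ℕ) : Prop :=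
  ∀ m, entryCount l T m = w m

/-- The Kostka number: the number of semistandard Young tableaux of shape `l`
and weight `w`. -/
noncomputable def kostka (l w : ℕ → ℕ) : ℕ :=
  Set.ncard {T : ℕ → ℕ → ℕ | IsSSYT l T ∧ HasWeight l T w}

/-- A multitableau has total weight `w`. -/
def MultiHasWeight {r : ℕ} (lam : Fin r → ℕ → ℕ) (T : Fin r → ℕ → ℕ → ℕ) (w : ℕ → ℕ) : Prop :=
  ∀ m, (∑ j, entryCount (lam j) (T j) m) = w m

/-- The multipartition Kostka number: the number of semistandard Young
`r`-multitableaux of shape `lam` and total weight `w`. -/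
noncomputable def kostkaMulti {r : ℕ} (lam : Fin r → ℕ → ℕ) (w : ℕ → ℕ) : ℕ :=
  Set.ncard {T : Fin r → ℕ → ℕ → ℕ | (∀ j, IsSSYT (lam j) (T j)) ∧ MultiHasWeight lam T w}

/-- The partition `λ̃` with `λ̃ i = ∑ j, λ(j) i`. -/
def tildePart {r : ℕ} (lam : Fin r → ℕ → ℕ) : ℕ → ℕ := fun i => ∑ j, lam j i


namespace Stmt13Aux

/-- number of entries `≤ m` in row `i`. -/
def ct (l : ℕ → ℕ) (T : ℕ → ℕ → ℕ) (m i : ℕ) : ℕ :=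
  ((Finset.range (l i)).filter (fun c => T i c ≤ m)).card

lemma lower_card {S : Finset ℕ} (hS : ∀ a b, a ≤ b → b ∈ S → a ∈ S) {c : ℕ} :
    c ∈ S ↔ c < S.card := by
  constructor
  · intro hc
    have h1 : Finset.range (c + 1) ⊆ S := fun a ha =>
      hS a c (Nat.lt_succ_iff.mp (Finset.mem_range.mp ha)) hc
    have := Finset.card_le_card h1
    simpa using this
  · intro hc
    by_contra hcs
    have h1 : S ⊆ Finset.range c := by
      intro b hb
      rw [Finset.mem_range]
      by_contra hb2
      exact hcs (hS c b (Nat.le_of_not_lt hb2) hb)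
    have := Finset.card_le_card h1
    simp at this; omega

lemma ct_lt_iff {l : ℕ → ℕ} {T : ℕ → ℕ → ℕ} (hT : IsSSYT l T) (m i c : ℕ) :
    c < ct l T m i ↔ c < l i ∧ T i c ≤ m := by
  rw [ct, ← lower_card]
  · simp [Finset.mem_filter, Finset.mem_range]
  · intro a b hab hb
    simp only [Finset.mem_filter, Finset.mem_range] at hb ⊢
    exact ⟨lt_of_le_of_lt hab hb.1, le_trans (hT.2.2.1 i a b hab hb.1) hb.2⟩

lemma ct_le {l : ℕ → ℕ} {T : ℕ → ℕ → ℕ} (m i : ℕ) : ct l T m i ≤ l i :=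
  le_trans (Finset.card_filter_le _ _) (le_of_eq (Finset.card_range _))

lemma ct_mono {l : ℕ → ℕ} {T : ℕ → ℕ → ℕ} {m m' : ℕ} (h : m ≤ m') (i : ℕ) :
    ct l T m i ≤ ct l T m' i := by
  apply Finset.card_le_card
  intro c hc
  simp only [Finset.mem_filter] at hc ⊢
  exact ⟨hc.1, le_trans hc.2 h⟩

lemma ct_strip {l : ℕ → ℕ} {T : ℕ → ℕ → ℕ} (hT : IsSSYT l T) (m i : ℕ)
    (hl : l (i+1) ≤ l i) : ct l T (m + 1) (i + 1) ≤ ct l T m i := by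
  by_contra hlt
  push_neg at hlt
  set c := ct l T m i with hc
  have h1 : c < l (i+1) ∧ T (i+1) c ≤ m + 1 := (ct_lt_iff hT _ _ _).mp hlt
  have h2 : T i c < T (i+1) c := hT.2.2.2 i (i+1) c (Nat.lt_succ_self i) h1.1
  have h3 : c < ct l T m i := (ct_lt_iff hT _ _ _).mpr ⟨lt_of_lt_of_le h1.1 hl, by omega⟩
  omega

lemma ct_zero {l : ℕ → ℕ} {T : ℕ → ℕ → ℕ} (hT : IsSSYT l T) (i : ℕ) :
    ct l T 0 i = 0 := by
  rw [ct, Finset.card_eq_zero, Finset.filter_eq_empty_iff]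
  intro c hc
  have := hT.1 i c (Finset.mem_range.mp hc)
  omega

lemma ct_top {l : ℕ → ℕ} {T : ℕ → ℕ → ℕ} {K i : ℕ}
    (hbd : ∀ c, c < l i → T i c ≤ K) : ct l T K i = l i := by
  rw [ct, Finset.filter_true_of_mem, Finset.card_range]
  intro c hc
  exact hbd c (Finset.mem_range.mp hc)



/-- Hypotheses making `ch` a chain of shapes of a tableau of shape `l`. -/
structure ChainOn (l : ℕ → ℕ) (ch : ℕ → ℕ → ℕ) (K : ℕ) : Prop where
  zero : ∀ i, ch 0 i = 0
  mono : ∀ m i, ch m i ≤ ch (m + 1) i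
  strip : ∀ m i, ch (m + 1) (i + 1) ≤ ch m i
  top : ∀ i, ch K i = l i
  le : ∀ m i, ch m i ≤ l i

lemma ChainOn.mono' {l ch K} (h : ChainOn l ch K) {m m' : ℕ} (hmm : m ≤ m') (i : ℕ) :
    ch m i ≤ ch m' i :=
  (monotone_nat_of_le_succ (fun k => h.mono k i)) hmm

noncomputable def tab (l : ℕ → ℕ) (ch : ℕ → ℕ → ℕ) : ℕ → ℕ → ℕ :=
  fun i c => if c < l i then sInf {m | c < ch m i} else 0

section TabLemmas

variable {l : ℕ → ℕ} {ch : ℕ → ℕ → ℕ} {K : ℕ}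

lemma tab_le_iff {l : ℕ → ℕ} {ch : ℕ → ℕ → ℕ} {K : ℕ} (h : ChainOn l ch K)
    {i c : ℕ} (hc : c < l i) (m : ℕ) :
    tab l ch i c ≤ m ↔ c < ch m i := by
  rw [tab, if_pos hc]
  have hne : {m | c < ch m i}.Nonempty := ⟨K, by simpa [h.top i] using hc⟩
  constructor
  · intro hs
    have h1 : c < ch (sInf {m | c < ch m i}) i := Nat.sInf_mem hne
    exact lt_of_lt_of_le h1 (h.mono' hs i)
  · intro hm
    exact Nat.sInf_le hm

lemma chain_iter {l : ℕ → ℕ} {ch : ℕ → ℕ → ℕ} {K : ℕ} (h : ChainOn l ch K) :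
    ∀ (k : ℕ) (m i c : ℕ), c < ch m (i + k) → k ≤ m ∧ c < ch (m - k) i := by
  intro k
  induction k with
  | zero => intro m i c hc; simpa using hc
  | succ k ih =>
    intro m i c hc
    have hc' : c < ch m ((i + 1) + k) := by
      have : i + (k + 1) = (i + 1) + k := by omega
      rwa [this] at hc
    obtain ⟨hkm, hc2⟩ := ih m (i + 1) c hc'
    rcases Nat.eq_zero_or_pos (m - k) with h0 | hpos
    · rw [h0, h.zero] at hc2; omega
    · obtain ⟨p, hp⟩ : ∃ p, m - k = p + 1 := ⟨m - k - 1, by omega⟩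
      rw [hp] at hc2
      have := lt_of_lt_of_le hc2 (h.strip p i)
      constructor
      · omega
      · have hpe : p = m - (k + 1) := by omega
        rwa [hpe] at this

lemma tab_ssyt (h : ChainOn l ch K) : IsSSYT l (tab l ch) := by
  refine ⟨?_, ?_, ?_, ?_⟩
  · intro i c hc
    by_contra hz
    push_neg at hz
    have h0 : tab l ch i c ≤ 0 := by omega
    have := (tab_le_iff h hc 0).mp h0
    rw [h.zero] at this
    omega
  · intro i c hc
    rw [tab, if_neg (by omega)]
  · intro i a b hab hb
    have ha : a < l i := lt_of_le_of_lt hab hb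
    rw [tab_le_iff h ha]
    have h1 : b < ch (tab l ch i b) i := (tab_le_iff h hb _).mp le_rfl
    exact lt_of_le_of_lt hab h1
  · intro i i' c hii hc
    have h1 : c < ch (tab l ch i' c) (i + (i' - i)) := by
      have h2 : i + (i' - i) = i' := by omega
      rw [h2]
      exact (tab_le_iff h hc _).mp le_rfl
    obtain ⟨hk, h3⟩ := chain_iter h (i' - i) _ i c h1
    have hci : c < l i := lt_of_lt_of_le h3 (h.le _ i)
    have h4 : tab l ch i c ≤ tab l ch i' c - (i' - i) := (tab_le_iff h hci _).mpr h3
    omega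

lemma ct_tab (h : ChainOn l ch K) (m i : ℕ) : ct l (tab l ch) m i = ch m i := by
  rw [ct]
  have : (Finset.range (l i)).filter (fun c => tab l ch i c ≤ m) = Finset.range (ch m i) := by
    ext c
    simp only [Finset.mem_filter, Finset.mem_range]
    constructor
    · rintro ⟨hc, htc⟩
      exact (tab_le_iff h hc m).mp htc
    · intro hc
      have hcl : c < l i := lt_of_lt_of_le hc (h.le m i)
      exact ⟨hcl, (tab_le_iff h hcl m).mpr hc⟩
  rw [this, Finset.card_range]

lemma tab_ct {l : ℕ → ℕ} {T : ℕ → ℕ → ℕ} (hT : IsSSYT l T) :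
    tab l (ct l T) = T := by
  funext i c
  by_cases hc : c < l i
  · rw [tab, if_pos hc]
    have : {m | c < ct l T m i} = Set.Ici (T i c) := by
      ext m
      simp only [Set.mem_setOf_eq, Set.mem_Ici, ct_lt_iff hT m i c]
      exact ⟨fun h => h.2, fun h => ⟨hc, h⟩⟩
    rw [this, csInf_Ici]
  · rw [tab, if_neg hc]
    exact (hT.2.1 i c (by omega)).symm

end TabLemmas

lemma entryCount_eq {l : ℕ → ℕ} {T : ℕ → ℕ → ℕ} {N : ℕ} (hT : IsSSYT l T)
    (hant : Antitone l) (hN : ∀ i, N ≤ i → l i = 0) (m : ℕ) :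
    entryCount l T m = ∑ i ∈ Finset.range N, (ct l T (m + 1) i - ct l T m i) := by
  classical
  have hrow : ∀ i, ((Finset.range (l i)).filter (fun c => T i c = m + 1)).card
      = ct l T (m + 1) i - ct l T m i := by
    intro i
    have hsplit : (Finset.range (l i)).filter (fun c => T i c = m + 1)
        = (Finset.range (l i)).filter (fun c => T i c ≤ m + 1)
          \ (Finset.range (l i)).filter (fun c => T i c ≤ m) := by
      ext c
      simp only [Finset.mem_filter, Finset.mem_sdiff, Finset.mem_range]
      omega
    have hsub : (Finset.range (l i)).filter (fun c => T i c ≤ m)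
        ⊆ (Finset.range (l i)).filter (fun c => T i c ≤ m + 1) := by
      intro c hc
      simp only [Finset.mem_filter] at hc ⊢
      exact ⟨hc.1, by omega⟩
    rw [hsplit, Finset.card_sdiff_of_subset hsub]
    rfl
  set F := (Finset.range N).biUnion
      (fun i => ((Finset.range (l i)).filter (fun c => T i c = m + 1)).image (fun c => (i, c)))
    with hF
  have hset : {p : ℕ × ℕ | p.2 < l p.1 ∧ T p.1 p.2 = m + 1} = ↑F := by
    ext ⟨a, b⟩
    simp only [Set.mem_setOf_eq, hF, Finset.coe_biUnion, Finset.mem_coe, Finset.mem_biUnion,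
      Finset.mem_image, Finset.mem_filter, Finset.mem_range, Set.mem_iUnion]
    constructor
    · rintro ⟨hb, hv⟩
      have haN : a < N := by
        by_contra h
        rw [hN a (by omega)] at hb
        omega
      exact ⟨a, haN, b, ⟨hb, hv⟩, rfl⟩
    · rintro ⟨i, hi, c, ⟨hc, hv⟩, heq⟩
      cases heq
      exact ⟨hc, hv⟩
  rw [entryCount, hset, Set.ncard_coe_finset]
  rw [Finset.card_biUnion]
  · apply Finset.sum_congr rfl
    intro i _
    rw [Finset.card_image_of_injective _ (fun x y h => by injection h), hrow]
  · intro x _ y _ hxy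
    simp only [Finset.disjoint_left, Finset.mem_image, Finset.mem_filter]
    rintro ⟨a, b⟩ ⟨c, _, hc⟩ ⟨d, _, hd⟩
    injection hc with hc1 _
    injection hd with hd1 _
    exact hxy (hc1.trans hd1.symm)

lemma entry_le {l : ℕ → ℕ} {T : ℕ → ℕ → ℕ} {N K : ℕ} (hT : IsSSYT l T)
    (hant : Antitone l) (hN : ∀ i, N ≤ i → l i = 0)
    (hcount : ∀ m, K ≤ m → entryCount l T m = 0) :
    ∀ i c, c < l i → T i c ≤ K := by
  intro i c hc
  by_contra hgt
  push_neg at hgt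
  have hv1 : 1 ≤ T i c := hT.1 i c hc
  have h1 : entryCount l T (T i c - 1) = 0 := hcount _ (by omega)
  rw [entryCount_eq hT hant hN] at h1
  have hiN : i < N := by
    by_contra h
    rw [hN i (by omega)] at hc
    omega
  have h2 : ct l T (T i c - 1 + 1) i - ct l T (T i c - 1) i = 0 :=
    Finset.sum_eq_zero_iff.mp h1 i (Finset.mem_range.mpr hiN)
  have ha : c < ct l T (T i c - 1 + 1) i := (ct_lt_iff hT _ _ _).mpr ⟨hc, by omega⟩
  have hb : ¬ c < ct l T (T i c - 1) i := by
    intro hb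
    have := ((ct_lt_iff hT _ _ _).mp hb).2
    omega
  omega

/-! ### Water-filling -/

def wfC (r : ℕ) (G : ℕ → ℕ → ℕ) (t : ℕ → ℕ) (i k : ℕ) : ℕ :=
  min (∑ j ∈ Finset.range k, G j i)
    ((∑ j ∈ Finset.range k, G j (i + 1)) + (t i - ∑ j ∈ Finset.range r, G j (i + 1)))

def stepG (r : ℕ) (G : ℕ → ℕ → ℕ) (t : ℕ → ℕ) (j i : ℕ) : ℕ :=
  wfC r G t i (j + 1) - wfC r G t i j

section WaterFill

variable {r : ℕ} {G : ℕ → ℕ → ℕ} {t : ℕ → ℕ} {i : ℕ}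

lemma wfC_le_succ (hant : ∀ j, G j (i + 1) ≤ G j i) (k : ℕ) :
    wfC r G t i (k + 1) ≤ wfC r G t i k + G k i := by
  have h := hant k
  unfold wfC
  rw [Finset.sum_range_succ, Finset.sum_range_succ (f := fun j => G j (i + 1))]
  omega

lemma wfC_ge_succ (hant : ∀ j, G j (i + 1) ≤ G j i) (k : ℕ) :
    wfC r G t i k + G k (i + 1) ≤ wfC r G t i (k + 1) := by
  have h := hant k
  unfold wfC
  rw [Finset.sum_range_succ, Finset.sum_range_succ (f := fun j => G j (i + 1))]
  omega

lemma stepG_le (hant : ∀ j, G j (i + 1) ≤ G j i) (k : ℕ) :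
    stepG r G t k i ≤ G k i := by
  have h := wfC_le_succ (r := r) (t := t) hant k
  unfold stepG
  omega

lemma stepG_ge (hant : ∀ j, G j (i + 1) ≤ G j i) (k : ℕ) :
    G k (i + 1) ≤ stepG r G t k i := by
  have h1 := wfC_ge_succ (r := r) (t := t) hant k
  have h2 := wfC_le_succ (r := r) (t := t) hant k
  unfold stepG
  omega

lemma stepG_sum (hant : ∀ j, G j (i + 1) ≤ G j i)
    (hlow : ∑ j ∈ Finset.range r, G j (i + 1) ≤ t i)
    (hup : t i ≤ ∑ j ∈ Finset.range r, G j i) :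
    ∑ j ∈ Finset.range r, stepG r G t j i = t i := by
  have hmono : ∀ k, wfC r G t i k ≤ wfC r G t i (k + 1) := fun k =>
    le_trans (Nat.le_add_right _ _) (wfC_ge_succ hant k)
  have htel : ∀ n, ∑ j ∈ Finset.range n, stepG r G t j i = wfC r G t i n := by
    intro n
    induction n with
    | zero => simp [wfC]
    | succ n ih =>
      rw [Finset.sum_range_succ, ih]
      have := hmono n
      unfold stepG
      omega
  rw [htel]
  unfold wfC
  omega

end WaterFill

/-! ### The iterated splitting -/

def iterG (r : ℕ) (lamN : ℕ → ℕ → ℕ) (ν : ℕ → ℕ → ℕ) (K : ℕ) : ℕ → ℕ → ℕ → ℕ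
  | 0 => lamN
  | s + 1 => stepG r (iterG r lamN ν K s) (ν (K - (s + 1)))

section Iter

variable {r K : ℕ} {lamN ν : ℕ → ℕ → ℕ}

lemma iter_inv (hlam_ant : ∀ j i, lamN j (i + 1) ≤ lamN j i)
    (hbase : ∀ i, ∑ j ∈ Finset.range r, lamN j i = ν K i)
    (hν_mono : ∀ m i, ν m i ≤ ν (m + 1) i)
    (hν_strip : ∀ m i, ν (m + 1) (i + 1) ≤ ν m i) :
    ∀ s, s ≤ K →
      (∀ j i, iterG r lamN ν K s j (i + 1) ≤ iterG r lamN ν K s j i) ∧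
      (∀ i, ∑ j ∈ Finset.range r, iterG r lamN ν K s j i = ν (K - s) i) := by
  intro s
  induction s with
  | zero => exact fun _ => ⟨hlam_ant, by simpa [iterG] using hbase⟩
  | succ s ih =>
    intro hs
    obtain ⟨ih1, ih2⟩ := ih (by omega)
    have hKs : K - s = (K - (s + 1)) + 1 := by omega
    have hlow : ∀ i, ∑ j ∈ Finset.range r, iterG r lamN ν K s j (i + 1) ≤ ν (K - (s + 1)) i := by
      intro i
      rw [ih2, hKs]
      exact hν_strip _ _
    have hup : ∀ i, ν (K - (s + 1)) i ≤ ∑ j ∈ Finset.range r, iterG r lamN ν K s j i := by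
      intro i
      rw [ih2, hKs]
      exact hν_mono _ _
    constructor
    · intro j i
      calc iterG r lamN ν K (s + 1) j (i + 1)
          ≤ iterG r lamN ν K s j (i + 1) := stepG_le (fun j' => ih1 j' (i + 1)) j
        _ ≤ iterG r lamN ν K (s + 1) j i := stepG_ge (fun j' => ih1 j' i) j
    · intro i
      exact stepG_sum (fun j' => ih1 j' i) (hlow i) (hup i)

end Iter

section Chain

variable {r K : ℕ} {lamN ν : ℕ → ℕ → ℕ}
  (hlam_ant : ∀ j i, lamN j (i + 1) ≤ lamN j i)
  (hbase : ∀ i, ∑ j ∈ Finset.range r, lamN j i = ν K i)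
  (hν_mono : ∀ m i, ν m i ≤ ν (m + 1) i)
  (hν_strip : ∀ m i, ν (m + 1) (i + 1) ≤ ν m i)
  (hν0 : ∀ i, ν 0 i = 0)
  (hν_stable : ∀ m, K ≤ m → ∀ i, ν m i = ν K i)

/-- The chain of shapes assigned to component `j`. -/
noncomputable def chainG (r : ℕ) (lamN ν : ℕ → ℕ → ℕ) (K : ℕ) (j : ℕ) : ℕ → ℕ → ℕ :=
  fun m i => iterG r lamN ν K (K - m) j i

include hlam_ant hbase hν_mono hν_strip in
lemma chain_mono_succ (m j i : ℕ) :
    chainG r lamN ν K j m i ≤ chainG r lamN ν K j (m + 1) i := by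
  unfold chainG
  rcases lt_or_ge m K with h | h
  · have hst : K - m = (K - (m + 1)) + 1 := by omega
    rw [hst]
    have hant := (iter_inv hlam_ant hbase hν_mono hν_strip (K - (m + 1)) (by omega)).1
    exact stepG_le (fun j' => hant j' i) j
  · have : K - m = K - (m + 1) := by omega
    rw [this]

include hlam_ant hbase hν_mono hν_strip in
lemma chain_strip' (m j i : ℕ) :
    chainG r lamN ν K j (m + 1) (i + 1) ≤ chainG r lamN ν K j m i := by
  unfold chainG
  rcases lt_or_ge m K with h | h
  · have hst : K - m = (K - (m + 1)) + 1 := by omega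
    rw [hst]
    have hant := (iter_inv hlam_ant hbase hν_mono hν_strip (K - (m + 1)) (by omega)).1
    exact stepG_ge (fun j' => hant j' i) j
  · have h1 : K - m = 0 := by omega
    have h2 : K - (m + 1) = 0 := by omega
    rw [h1, h2]
    exact hlam_ant j i

include hlam_ant hbase hν_mono hν_strip in
lemma chain_mono' {m m' : ℕ} (hmm : m ≤ m') (j i : ℕ) :
    chainG r lamN ν K j m i ≤ chainG r lamN ν K j m' i :=
  (monotone_nat_of_le_succ
    (fun k => chain_mono_succ hlam_ant hbase hν_mono hν_strip k j i)) hmm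

lemma chain_top (j i : ℕ) : chainG r lamN ν K j K i = lamN j i := by
  unfold chainG
  rw [Nat.sub_self]
  rfl

include hlam_ant hbase hν_mono hν_strip in
lemma chain_le (m j i : ℕ) : chainG r lamN ν K j m i ≤ lamN j i := by
  rcases le_or_gt m K with h | h
  · calc chainG r lamN ν K j m i ≤ chainG r lamN ν K j K i :=
        chain_mono' hlam_ant hbase hν_mono hν_strip h j i
      _ = lamN j i := chain_top j i
  · unfold chainG
    rw [Nat.sub_eq_zero_of_le (by omega)]
    rfl

include hlam_ant hbase hν_mono hν_strip hν_stable in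
lemma chain_sum (m i : ℕ) :
    ∑ j ∈ Finset.range r, chainG r lamN ν K j m i = ν m i := by
  unfold chainG
  rcases le_or_gt m K with h | h
  · have h2 := (iter_inv hlam_ant hbase hν_mono hν_strip (K - m) (by omega)).2 i
    have h3 : K - (K - m) = m := by omega
    rwa [h3] at h2
  · rw [Nat.sub_eq_zero_of_le (by omega)]
    rw [hν_stable m (by omega) i]
    exact hbase i

include hlam_ant hbase hν_mono hν_strip hν0 in
lemma chain_zero {j : ℕ} (hj : j < r) (i : ℕ) : chainG r lamN ν K j 0 i = 0 := by
  have hs := (iter_inv hlam_ant hbase hν_mono hν_strip K le_rfl).2 i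
  rw [Nat.sub_self, hν0 i] at hs
  have := Finset.sum_eq_zero_iff.mp hs j (Finset.mem_range.mpr hj)
  unfold chainG
  rw [Nat.sub_zero]
  exact this

include hlam_ant hbase hν_mono hν_strip hν0 hν_stable in
lemma chain_chainOn {j : ℕ} (hj : j < r) {lamj : ℕ → ℕ} (hlamj : ∀ i, lamN j i = lamj i) :
    ChainOn lamj (chainG r lamN ν K j) K := by
  refine ⟨chain_zero hlam_ant hbase hν_mono hν_strip hν0 hj, ?_, ?_, ?_, ?_⟩
  · exact fun m i => chain_mono_succ hlam_ant hbase hν_mono hν_strip m j i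
  · exact fun m i => chain_strip' hlam_ant hbase hν_mono hν_strip m j i
  · intro i
    rw [chain_top, hlamj]
  · intro m i
    rw [← hlamj]
    exact chain_le hlam_ant hbase hν_mono hν_strip m j i

end Chain

end Stmt13Aux

theorem stmt13 (r n : ℕ) (lam : Fin r → ℕ → ℕ) (mu : ℕ → ℕ)
    (hlp : ∀ j, IsPartition (lam j)) (hln : (∑ j, psize (lam j)) = n)
    (hmp : IsPartition mu) (hmn : psize mu = n) :
    kostka (tildePart lam) mu ≤ kostkaMulti lam mu ∧
      (kostkaMulti lam mu = 1 → kostka (tildePart lam) mu = 1) := by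
  classical
  open Stmt13Aux in
  obtain ⟨Kμ, hKμ⟩ := hmp.2
  have hvan : ∃ N, ∀ i, N ≤ i → tildePart lam i = 0 := by
    refine ⟨Finset.univ.sup (fun j => (hlp j).2.choose), fun i hi => ?_⟩
    apply Finset.sum_eq_zero
    intro j _
    exact (hlp j).2.choose_spec i
      (le_trans (Finset.le_sup (f := fun j => (hlp j).2.choose) (Finset.mem_univ j)) hi)
  obtain ⟨N, hN⟩ := hvan
  have htp_ant : Antitone (tildePart lam) := fun a b hab =>
    Finset.sum_le_sum (fun j _ => (hlp j).1 hab)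
  have hlam_le : ∀ (j : Fin r) (i : ℕ), lam j i ≤ tildePart lam i := by
    intro j i
    unfold tildePart
    exact Finset.single_le_sum (f := fun j => lam j i) (fun j _ => Nat.zero_le _)
      (Finset.mem_univ j)
  have hlamN0 : ∀ (j : Fin r) (i : ℕ), N ≤ i → lam j i = 0 := by
    intro j i hi
    have := hlam_le j i
    rw [hN i hi] at this
    omega
  set A := {T : ℕ → ℕ → ℕ | IsSSYT (tildePart lam) T ∧ HasWeight (tildePart lam) T mu}
    with hA
  set B := {S : Fin r → ℕ → ℕ → ℕ |
      (∀ j, IsSSYT (lam j) (S j)) ∧ MultiHasWeight lam S mu} with hB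
  have hkA : kostka (tildePart lam) mu = A.ncard := rfl
  have hkB : kostkaMulti lam mu = B.ncard := rfl
  -- entry bounds
  have hAbd : ∀ T ∈ A, ∀ i c, c < tildePart lam i → T i c ≤ Kμ := by
    rintro T ⟨hT, hw⟩
    exact Stmt13Aux.entry_le hT htp_ant hN (fun m hm => (hw m).trans (hKμ m hm))
  have hBcnt : ∀ S ∈ B, ∀ (j : Fin r) (m : ℕ), Kμ ≤ m → entryCount (lam j) (S j) m = 0 := by
    rintro S ⟨hS, hw⟩ j m hm
    have h0 : (∑ j', entryCount (lam j') (S j') m) = 0 := (hw m).trans (hKμ m hm)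
    exact Finset.sum_eq_zero_iff.mp h0 j (Finset.mem_univ j)
  have hBbd : ∀ S ∈ B, ∀ (j : Fin r) (i c : ℕ), c < lam j i → S j i c ≤ Kμ := by
    intro S hSB j
    exact Stmt13Aux.entry_le (hSB.1 j) (hlp j).1 (hlamN0 j) (hBcnt S hSB j)
  -- finiteness
  have hAfin : A.Finite := by
    have hinj : Set.InjOn (fun (T : ℕ → ℕ → ℕ) (i : Fin N) (c : Fin (tildePart lam 0)) =>
        (⟨min (T i c) Kμ, Nat.lt_succ_of_le (Nat.min_le_right _ _)⟩ : Fin (Kμ + 1))) A := by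
      rintro T hT T' hT' he
      funext i c
      by_cases hc : c < tildePart lam i
      · have hiN : i < N := by
          by_contra h
          rw [hN i (by omega)] at hc
          omega
        have hc0 : c < tildePart lam 0 := lt_of_lt_of_le hc (htp_ant (Nat.zero_le i))
        have h1 := congrFun (congrFun he ⟨i, hiN⟩) ⟨c, hc0⟩
        have h2 : min (T i c) Kμ = min (T' i c) Kμ := congrArg Fin.val h1
        have b1 := hAbd T hT i c hc
        have b2 := hAbd T' hT' i c hc
        clear h1 he
        omega
      · rw [hT.1.2.1 i c (by omega), hT'.1.2.1 i c (by omega)]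
    exact Set.Finite.of_finite_image (Set.toFinite _) hinj
  have hBfin : B.Finite := by
    have hinj : Set.InjOn (fun (S : Fin r → ℕ → ℕ → ℕ) (j : Fin r) (i : Fin N)
        (c : Fin (tildePart lam 0)) =>
        (⟨min (S j i c) Kμ, Nat.lt_succ_of_le (Nat.min_le_right _ _)⟩ : Fin (Kμ + 1))) B := by
      rintro S hS S' hS' he
      funext j i c
      by_cases hc : c < lam j i
      · have hiN : i < N := by
          by_contra h
          rw [hlamN0 j i (by omega)] at hc
          omega
        have hc0 : c < tildePart lam 0 :=
          lt_of_lt_of_le (lt_of_lt_of_le hc (hlam_le j i)) (htp_ant (Nat.zero_le i))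
        have h1 := congrFun (congrFun (congrFun he j) ⟨i, hiN⟩) ⟨c, hc0⟩
        have h2 : min (S j i c) Kμ = min (S' j i c) Kμ := congrArg Fin.val h1
        have b1 := hBbd S hS j i c hc
        have b2 := hBbd S' hS' j i c hc
        clear h1 he
        omega
      · rw [(hS.1 j).2.1 i c (by omega), (hS'.1 j).2.1 i c (by omega)]
    exact Set.Finite.of_finite_image (Set.toFinite _) hinj
  -- the merge map
  set merge : (Fin r → ℕ → ℕ → ℕ) → (ℕ → ℕ → ℕ) := fun S =>
    Stmt13Aux.tab (tildePart lam) (fun m i => ∑ j, Stmt13Aux.ct (lam j) (S j) m i)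
    with hmerge
  have hSchain : ∀ S ∈ B, Stmt13Aux.ChainOn (tildePart lam)
      (fun m i => ∑ j, Stmt13Aux.ct (lam j) (S j) m i) Kμ := by
    intro S hSB
    refine ⟨?_, ?_, ?_, ?_, ?_⟩
    · intro i
      exact Finset.sum_eq_zero fun j _ => Stmt13Aux.ct_zero (hSB.1 j) i
    · intro m i
      exact Finset.sum_le_sum fun j _ => Stmt13Aux.ct_mono (Nat.le_succ m) i
    · intro m i
      exact Finset.sum_le_sum fun j _ =>
        Stmt13Aux.ct_strip (hSB.1 j) m i ((hlp j).1 (Nat.le_succ i))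
    · intro i
      exact Finset.sum_congr rfl fun j _ => Stmt13Aux.ct_top (fun c hc => hBbd S hSB j i c hc)
    · intro m i
      exact Finset.sum_le_sum fun j _ => Stmt13Aux.ct_le m i
  have hmergeA : ∀ S ∈ B, merge S ∈ A := by
    intro S hSB
    have hch := hSchain S hSB
    refine ⟨Stmt13Aux.tab_ssyt hch, ?_⟩
    intro m
    rw [hmerge]
    rw [Stmt13Aux.entryCount_eq (Stmt13Aux.tab_ssyt hch) htp_ant hN]
    calc ∑ i ∈ Finset.range N,
          (Stmt13Aux.ct (tildePart lam)
            (Stmt13Aux.tab (tildePart lam) (fun m i => ∑ j, Stmt13Aux.ct (lam j) (S j) m i)) (m+1) i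
          - Stmt13Aux.ct (tildePart lam)
            (Stmt13Aux.tab (tildePart lam) (fun m i => ∑ j, Stmt13Aux.ct (lam j) (S j) m i)) m i)
        = ∑ i ∈ Finset.range N,
          ((∑ j, Stmt13Aux.ct (lam j) (S j) (m+1) i) - (∑ j, Stmt13Aux.ct (lam j) (S j) m i)) := by
          refine Finset.sum_congr rfl fun i _ => ?_
          rw [Stmt13Aux.ct_tab hch, Stmt13Aux.ct_tab hch]
      _ = ∑ i ∈ Finset.range N,
          ∑ j, (Stmt13Aux.ct (lam j) (S j) (m+1) i - Stmt13Aux.ct (lam j) (S j) m i) := by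
          refine Finset.sum_congr rfl fun i _ => ?_
          rw [Finset.sum_tsub_distrib _ (fun j _ => Stmt13Aux.ct_mono (Nat.le_succ m) i)]
      _ = ∑ j, ∑ i ∈ Finset.range N,
          (Stmt13Aux.ct (lam j) (S j) (m+1) i - Stmt13Aux.ct (lam j) (S j) m i) :=
          Finset.sum_comm
      _ = ∑ j, entryCount (lam j) (S j) m := by
          refine Finset.sum_congr rfl fun j _ => ?_
          rw [← Stmt13Aux.entryCount_eq (hSB.1 j) (hlp j).1 (hlamN0 j)]
      _ = mu m := hSB.2 m
  -- the split map
  set lamN : ℕ → ℕ → ℕ := fun j i => if h : j < r then lam ⟨j, h⟩ i else 0 with hlamN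
  have hlamNval : ∀ (j : Fin r) (i : ℕ), lamN j.val i = lam j i := by
    intro j i
    simp only [hlamN, j.isLt, dif_pos, Fin.eta]
  have hlamN_ant : ∀ j i, lamN j (i + 1) ≤ lamN j i := by
    intro j i
    by_cases h : j < r
    · simp only [hlamN, dif_pos h]
      exact (hlp ⟨j, h⟩).1 (Nat.le_succ i)
    · simp [hlamN, dif_neg h]
  set split : (ℕ → ℕ → ℕ) → (Fin r → ℕ → ℕ → ℕ) := fun T j =>
    Stmt13Aux.tab (lam j)
      (Stmt13Aux.chainG r lamN (fun m i => Stmt13Aux.ct (tildePart lam) T m i) Kμ j.val)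
    with hsplit
  -- facts about ν for T ∈ A
  have hTfacts : ∀ T ∈ A,
      (∀ i, ∑ j ∈ Finset.range r, lamN j i = Stmt13Aux.ct (tildePart lam) T Kμ i) ∧
      (∀ m, Kμ ≤ m → ∀ i,
        Stmt13Aux.ct (tildePart lam) T m i = Stmt13Aux.ct (tildePart lam) T Kμ i) := by
    intro T hTA
    have htop : ∀ i, Stmt13Aux.ct (tildePart lam) T Kμ i = tildePart lam i := fun i =>
      Stmt13Aux.ct_top (fun c hc => hAbd T hTA i c hc)
    constructor
    · intro i
      rw [htop i, ← Fin.sum_univ_eq_sum_range (fun j => lamN j i) r]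
      exact Finset.sum_congr rfl fun j _ => hlamNval j i
    · intro m hm i
      have h1 : Stmt13Aux.ct (tildePart lam) T m i ≤ tildePart lam i := Stmt13Aux.ct_le m i
      have h2 := Stmt13Aux.ct_mono (l := tildePart lam) (T := T) hm i
      rw [htop i] at h2 ⊢
      omega
  have hTchain : ∀ T ∈ A, ∀ j : Fin r, Stmt13Aux.ChainOn (lam j)
      (Stmt13Aux.chainG r lamN (fun m i => Stmt13Aux.ct (tildePart lam) T m i) Kμ j.val) Kμ := by
    intro T hTA j
    obtain ⟨hbase, hstable⟩ := hTfacts T hTA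
    exact Stmt13Aux.chain_chainOn hlamN_ant hbase
      (fun m i => Stmt13Aux.ct_mono (Nat.le_succ m) i)
      (fun m i => Stmt13Aux.ct_strip hTA.1 m i (htp_ant (Nat.le_succ i)))
      (fun i => Stmt13Aux.ct_zero hTA.1 i)
      hstable j.isLt (hlamNval j)
  have hchain_sum : ∀ T ∈ A, ∀ m i,
      ∑ j : Fin r, Stmt13Aux.chainG r lamN
        (fun m i => Stmt13Aux.ct (tildePart lam) T m i) Kμ j.val m i
      = Stmt13Aux.ct (tildePart lam) T m i := by
    intro T hTA m i
    obtain ⟨hbase, hstable⟩ := hTfacts T hTA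
    rw [Fin.sum_univ_eq_sum_range (fun j => Stmt13Aux.chainG r lamN
      (fun m i => Stmt13Aux.ct (tildePart lam) T m i) Kμ j m i) r]
    exact Stmt13Aux.chain_sum hlamN_ant hbase
      (fun m i => Stmt13Aux.ct_mono (Nat.le_succ m) i)
      (fun m i => Stmt13Aux.ct_strip hTA.1 m i (htp_ant (Nat.le_succ i)))
      hstable m i
  have hsplitB : ∀ T ∈ A, split T ∈ B := by
    intro T hTA
    refine ⟨fun j => Stmt13Aux.tab_ssyt (hTchain T hTA j), ?_⟩
    intro m
    calc ∑ j, entryCount (lam j) (split T j) m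
        = ∑ j : Fin r, ∑ i ∈ Finset.range N,
            (Stmt13Aux.chainG r lamN (fun m i => Stmt13Aux.ct (tildePart lam) T m i) Kμ j.val (m+1) i
            - Stmt13Aux.chainG r lamN (fun m i => Stmt13Aux.ct (tildePart lam) T m i) Kμ j.val m i) := by
          refine Finset.sum_congr rfl fun j _ => ?_
          rw [hsplit]
          rw [Stmt13Aux.entryCount_eq (Stmt13Aux.tab_ssyt (hTchain T hTA j)) (hlp j).1 (hlamN0 j)]
          exact Finset.sum_congr rfl fun i _ => by
            rw [Stmt13Aux.ct_tab (hTchain T hTA j), Stmt13Aux.ct_tab (hTchain T hTA j)]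
      _ = ∑ i ∈ Finset.range N, ∑ j : Fin r,
            (Stmt13Aux.chainG r lamN (fun m i => Stmt13Aux.ct (tildePart lam) T m i) Kμ j.val (m+1) i
            - Stmt13Aux.chainG r lamN (fun m i => Stmt13Aux.ct (tildePart lam) T m i) Kμ j.val m i) :=
          Finset.sum_comm
      _ = ∑ i ∈ Finset.range N,
            (Stmt13Aux.ct (tildePart lam) T (m+1) i - Stmt13Aux.ct (tildePart lam) T m i) := by
          refine Finset.sum_congr rfl fun i _ => ?_
          rw [Finset.sum_tsub_distrib _ (fun j _ => ?_)]
          · rw [hchain_sum T hTA, hchain_sum T hTA]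
          · obtain ⟨hbase, hstable⟩ := hTfacts T hTA
            exact Stmt13Aux.chain_mono_succ hlamN_ant hbase
              (fun m i => Stmt13Aux.ct_mono (Nat.le_succ m) i)
              (fun m i => Stmt13Aux.ct_strip hTA.1 m i (htp_ant (Nat.le_succ i))) m _ i
      _ = entryCount (tildePart lam) T m :=
          (Stmt13Aux.entryCount_eq hTA.1 htp_ant hN m).symm
      _ = mu m := hTA.2 m
  have hms : ∀ T ∈ A, merge (split T) = T := by
    intro T hTA
    have hfun : (fun m i => ∑ j, Stmt13Aux.ct (lam j) (split T j) m i)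
        = fun m i => Stmt13Aux.ct (tildePart lam) T m i := by
      funext m i
      calc ∑ j, Stmt13Aux.ct (lam j) (split T j) m i
          = ∑ j : Fin r, Stmt13Aux.chainG r lamN
              (fun m i => Stmt13Aux.ct (tildePart lam) T m i) Kμ j.val m i := by
            refine Finset.sum_congr rfl fun j _ => ?_
            rw [hsplit, Stmt13Aux.ct_tab (hTchain T hTA j)]
        _ = Stmt13Aux.ct (tildePart lam) T m i := hchain_sum T hTA m i
    have hmm : merge (split T) = Stmt13Aux.tab (tildePart lam)
        (fun m i => ∑ j, Stmt13Aux.ct (lam j) (split T j) m i) := rfl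
    rw [hmm, hfun]
    exact Stmt13Aux.tab_ct hTA.1
  -- conclusion
  have hinj : Set.InjOn split A := by
    intro T hTA T' hTA' he
    rw [← hms T hTA, ← hms T' hTA', he]
  have himg : split '' A ⊆ B := by
    rintro _ ⟨T, hTA, rfl⟩
    exact hsplitB T hTA
  have h1 : A.ncard ≤ B.ncard := by
    rw [← Set.ncard_image_of_injOn hinj]
    exact Set.ncard_le_ncard himg hBfin
  constructor
  · rw [hkA, hkB]
    exact h1
  · intro hone
    rw [hkB] at hone
    have hBne : B.Nonempty := Set.nonempty_of_ncard_ne_zero (by omega)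
    obtain ⟨S, hSB⟩ := hBne
    have hAne : A.Nonempty := ⟨merge S, hmergeA S hSB⟩
    have h2 : 0 < A.ncard := (Set.ncard_pos hAfin).mpr hAne
    rw [hkA]
    omega
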